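/- arXiv:2204.14049 — 2 statements merged into one kernel-verified Lean document; each statement's English description precedes it below -/
import Mathlib

section
/- Fix n ≥ 2 and p ≥ 2 with 36 log p ≤ 4n, and set f = √(36 log p / n). Then f ≤ 2 implies that for all t ∈ [f, 2], p · exp(−(n/4)t²/(2 + 2t/3)) ≤ exp(1 − t/f). -/
open Real

set_option maxHeartbeats 1000000

/-- The key elementary inequality in the concentration lemma: with
f = √(36 log p / n) ≤ 2, for every t ∈ [f, 2],
p·exp(−(n/4)t²/(2+2t/3)) ≤ exp(1 − t/f). -/
theorem stmt_15 (n p : ℕ) (hn : 2 ≤ n) (hp : 2 ≤ p)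
    (h36 : 36 * Real.log p ≤ 4 * n)
    (f : ℝ) (hf : f = Real.sqrt (36 * Real.log p / n))
    (hf2 : f ≤ 2) :
    ∀ t ∈ Set.Icc f 2,
      (p : ℝ) * Real.exp (-((n : ℝ) / 4) * t ^ 2 / (2 + 2 * t / 3))
        ≤ Real.exp (1 - t / f) := by
  intro t ht
  obtain ⟨htf, ht2⟩ := ht
  have hn0 : (0:ℝ) < n := by positivity
  have hn2 : (2:ℝ) ≤ n := by exact_mod_cast hn
  have hp0 : (0:ℝ) < p := by positivity
  set L : ℝ := Real.log p with hL
  have hL2 : Real.log 2 ≤ L := Real.log_le_log (by norm_num) (by exact_mod_cast hp)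
  have hlog2 : (0.6931471803 : ℝ) < Real.log 2 := Real.log_two_gt_d9
  have hLpos : (0.69 : ℝ) < L := by linarith
  have hfpos : 0 < f := by
    rw [hf]
    apply Real.sqrt_pos.mpr
    positivity
  have htpos : 0 < t := lt_of_lt_of_le hfpos htf
  have hfsq : f ^ 2 = 36 * L / n := by
    rw [hf]
    exact Real.sq_sqrt (by positivity)
  have hfsq' : f ^ 2 * n = 36 * L := by
    field_simp at hfsq ⊢; linarith [hfsq]
  -- reduce to an inequality of exponents
  rw [show (p : ℝ) = Real.exp L from (Real.exp_log hp0).symm, ← Real.exp_add,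
    Real.exp_le_exp]
  set s : ℝ := t / f with hs
  have hs1 : 1 ≤ s := (one_le_div hfpos).mpr htf
  have hsf : s * f = t := div_mul_cancel₀ t (ne_of_gt hfpos)
  have hs2 : s ^ 2 * (36 * L) = n * t ^ 2 := by
    have h1 : s ^ 2 * (f ^ 2 * (n:ℝ)) = (s * f) ^ 2 * n := by ring
    rw [hsf] at h1
    rw [← hfsq', h1]; ring
  have hft2 : f ^ 2 ≤ t ^ 2 := by nlinarith
  have hLle : 36 * L ≤ n * t ^ 2 := by nlinarith [mul_le_mul_of_nonneg_right hft2 hn0.le]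
  set d : ℝ := 2 + 2 * t / 3 with hd
  have hdpos : 0 < d := by simp only [hd]; linarith
  have hdle : d ≤ 10 / 3 := by simp only [hd]; linarith
  set X : ℝ := -((n : ℝ) / 4) * t ^ 2 / d with hX
  have hXd : X * d = -((n : ℝ) / 4) * t ^ 2 := div_mul_cancel₀ _ (ne_of_gt hdpos)
  have hXneg : X ≤ 0 := by
    rw [hX]
    apply div_nonpos_of_nonpos_of_nonneg
    · nlinarith
    · linarith
  have hX40 : (3 / 40 : ℝ) * (n * t ^ 2) ≤ -X := by nlinarith [hXd]
  -- goal : L + X ≤ 1 - s, i.e. s + L ≤ 1 + (-X)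
  have hss : s ≤ s ^ 2 := le_self_pow₀ hs1 two_ne_zero
  have hA : s * (36 * L) ≤ (n:ℝ) * t ^ 2 := by
    calc s * (36 * L) ≤ s ^ 2 * (36 * L) :=
          mul_le_mul_of_nonneg_right hss (by linarith)
      _ = n * t ^ 2 := hs2
  have h27 : (0:ℝ) ≤ (27/10) * L - 1 := by linarith
  have hP : (0:ℝ) ≤ ((n:ℝ) * t ^ 2 - 36 * L) * ((27/10) * L - 1) :=
    mul_nonneg (by linarith) h27
  have key : s + L ≤ 1 + (3 / 40) * (n * t ^ 2) := by
    nlinarith [hA, hP, hLpos, sq_nonneg L]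
  linarith
end

section
/- Let g = (g₁,…,g_q)ᵀ ∼ N(0, I_q) be a standard Gaussian vector and let λ₁ ≥ λ₂ ≥ ⋯ ≥ λ_q > 0 be positive reals. Define μ_j = E[λ_j g_j² / (λ₁g₁² + ⋯ + λ_q g_q²)] for j = 1,…,q. Then μ₁ ≥ μ₂ ≥ ⋯ ≥ μ_q, ∑_{j=1}^q μ_j = 1, and each μ_j > 0; moreover if λ_j > λ_{j+1} then μ_j > μ_{j+1}. -/
open MeasureTheory ProbabilityTheory

lemma stmt19_arith_le {t s a b c : ℝ} (hst : s ≤ t) (hs : 0 < s) (ha : 0 < a) (hb : 0 < b)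
    (hc : 0 ≤ c) :
    s * b / (t * a + s * b + c) + s * a / (t * b + s * a + c)
      ≤ t * a / (t * a + s * b + c) + t * b / (t * b + s * a + c) := by
  have ht : 0 < t := hs.trans_le hst
  have hD1 : 0 < t * a + s * b + c := by nlinarith
  have hD2 : 0 < t * b + s * a + c := by nlinarith
  have h1 : 0 ≤ (t - s) * (t + s) * a * b :=
    mul_nonneg (mul_nonneg (mul_nonneg (sub_nonneg.2 hst) (by linarith)) ha.le) hb.le
  have h2 : 0 ≤ (t - s) * c * (a + b) :=
    mul_nonneg (mul_nonneg (sub_nonneg.2 hst) hc) (by linarith)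
  rw [div_add_div _ _ hD1.ne' hD2.ne', div_add_div _ _ hD1.ne' hD2.ne',
    div_le_div_iff_of_pos_right (by positivity)]
  nlinarith [h1, h2]

lemma stmt19_arith_lt {t s a b c : ℝ} (hst : s < t) (hs : 0 < s) (ha : 0 < a) (hb : 0 < b)
    (hc : 0 ≤ c) :
    s * b / (t * a + s * b + c) + s * a / (t * b + s * a + c)
      < t * a / (t * a + s * b + c) + t * b / (t * b + s * a + c) := by
  have ht : 0 < t := hs.trans hst
  have hD1 : 0 < t * a + s * b + c := by nlinarith
  have hD2 : 0 < t * b + s * a + c := by nlinarith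
  have h1 : 0 < (t - s) * (t + s) * a * b :=
    mul_pos (mul_pos (mul_pos (sub_pos.2 hst) (by linarith)) ha) hb
  have h2 : 0 ≤ (t - s) * c * (a + b) :=
    mul_nonneg (mul_nonneg (sub_nonneg.2 hst.le) hc) (by linarith)
  rw [div_add_div _ _ hD1.ne' hD2.ne', div_add_div _ _ hD1.ne' hD2.ne',
    div_lt_div_iff_of_pos_right (by positivity)]
  nlinarith [h1, h2]

/-- For a standard Gaussian vector g and positive reals λ₁ ≥ ⋯ ≥ λ_q, the
quantities μ_j = E[λ_j g_j²/∑ᵢ λᵢ gᵢ²] are decreasing, positive, sum to one, and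
are strictly decreasing across a strict gap in the λ's. -/
theorem stmt_19 {Ω : Type} [MeasurableSpace Ω] (P : Measure Ω) [IsProbabilityMeasure P]
    {q : ℕ} (hq : 0 < q)
    (g : Fin q → Ω → ℝ) (hgm : ∀ j, Measurable (g j))
    (hindep : iIndepFun g P)
    (hgauss : ∀ j, Measure.map (g j) P = gaussianReal 0 1)
    (lam : Fin q → ℝ) (hpos : ∀ j, 0 < lam j)
    (hmono : ∀ i j : Fin q, i ≤ j → lam j ≤ lam i)
    (μ : Fin q → ℝ)
    (hμ : ∀ j, μ j = ∫ ω, (lam j * (g j ω) ^ 2) / (∑ i, lam i * (g i ω) ^ 2) ∂P) :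
    (∀ i j : Fin q, i ≤ j → μ j ≤ μ i) ∧
    (∑ j, μ j) = 1 ∧
    (∀ j, 0 < μ j) ∧
    (∀ j k : Fin q, (j : ℕ) + 1 = (k : ℕ) → lam k < lam j → μ k < μ j) := by
  classical
  set π : Measure (Fin q → ℝ) := Measure.pi (fun _ => gaussianReal 0 1) with hπ
  have hprob : IsProbabilityMeasure π := by infer_instance
  set G : Ω → (Fin q → ℝ) := fun ω i => g i ω with hG
  have hGmeas : Measurable G := measurable_pi_lambda _ hgm
  -- the law of G is the product gaussian
  have hmap : Measure.map G P = π := by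
    refine (Measure.pi_eq fun s hs => ?_).symm
    rw [Measure.map_apply hGmeas (MeasurableSet.univ_pi hs)]
    have hpre : G ⁻¹' Set.pi Set.univ s = ⋂ i ∈ Finset.univ, g i ⁻¹' s i := by
      ext ω; simp [hG, Set.mem_pi]
    rw [hpre, hindep.measure_inter_preimage_eq_mul Finset.univ (fun i _ => hs i)]
    exact Finset.prod_congr rfl fun i _ => by
      rw [← hgauss i, Measure.map_apply (hgm i) (hs i)]
  -- the denominator and ratio functions on the product space
  set S : (Fin q → ℝ) → ℝ := fun x => ∑ i, lam i * x i ^ 2 with hS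
  set F : Fin q → (Fin q → ℝ) → ℝ := fun j x => lam j * x j ^ 2 / S x with hF
  have hSmeas : Measurable S := by
    apply Finset.measurable_sum
    exact fun i _ => (measurable_const.mul ((measurable_pi_apply i).pow measurable_const))
  have hFmeas : ∀ j, Measurable (F j) := fun j =>
    ((measurable_const.mul ((measurable_pi_apply j).pow measurable_const)).div hSmeas)
  -- basic bounds
  have hnum_nonneg : ∀ j (x : Fin q → ℝ), 0 ≤ lam j * x j ^ 2 := fun j x =>
    mul_nonneg (hpos j).le (sq_nonneg _)
  have hnum_le : ∀ j (x : Fin q → ℝ), lam j * x j ^ 2 ≤ S x := fun j x =>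
    Finset.single_le_sum (fun i _ => hnum_nonneg i x) (Finset.mem_univ j)
  have hS_nonneg : ∀ x, 0 ≤ S x := fun x =>
    Finset.sum_nonneg fun i _ => hnum_nonneg i x
  have hF_nonneg : ∀ j x, 0 ≤ F j x := fun j x => div_nonneg (hnum_nonneg j x) (hS_nonneg x)
  have hF_le_one : ∀ j x, F j x ≤ 1 := by
    intro j x
    rcases eq_or_lt_of_le (hS_nonneg x) with h | h
    · have : lam j * x j ^ 2 = 0 :=
        le_antisymm (by rw [h]; exact hnum_le j x) (hnum_nonneg j x)
      simp [hF, this]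
    · exact (div_le_one h).2 (hnum_le j x)
  -- integrability of any [0,1]-bounded measurable function on π
  have hint : ∀ f : (Fin q → ℝ) → ℝ, Measurable f → (∀ x, 0 ≤ f x) → (∀ x, f x ≤ 1) →
      Integrable f π := by
    intro f hf h0 h1
    refine (integrable_const (1:ℝ)).mono' hf.aestronglyMeasurable ?_
    exact Filter.Eventually.of_forall fun x => by
      rw [Real.norm_eq_abs, abs_of_nonneg (h0 x)]; exact h1 x
  have hFint : ∀ j, Integrable (F j) π := fun j =>
    hint _ (hFmeas j) (hF_nonneg j) (hF_le_one j)
  -- μ as an integral over π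
  have hμ' : ∀ j, μ j = ∫ x, F j x ∂π := by
    intro j
    rw [hμ j, ← hmap, integral_map hGmeas.aemeasurable (hFmeas j).aestronglyMeasurable]
  -- a.e. all coordinates are nonzero
  have hzero : ∀ i : Fin q, π {x : Fin q → ℝ | x i = 0} = 0 := by
    intro i
    have hsub : {x : Fin q → ℝ | x i = 0} ⊆
        Set.pi Set.univ (fun j => if j = i then ({0} : Set ℝ) else Set.univ) := by
      intro x hx j _
      by_cases h : j = i
      · subst h; simpa using hx
      · simp [h]
    refine measure_mono_null hsub ?_
    rw [hπ, Measure.pi_pi]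
    refine Finset.prod_eq_zero (Finset.mem_univ i) ?_
    have : gaussianReal 0 1 ({0} : Set ℝ) = 0 :=
      gaussianReal_absolutelyContinuous 0 one_ne_zero (measure_singleton 0)
    simpa using this
  have hae : ∀ᵐ x ∂π, ∀ i, x i ≠ 0 := by
    rw [MeasureTheory.ae_all_iff]
    intro i
    rw [ae_iff]
    simpa using hzero i
  have hSpos : ∀ x : Fin q → ℝ, (∀ i, x i ≠ 0) → 0 < S x := by
    intro x hx
    refine lt_of_lt_of_le ?_ (hnum_le ⟨0, hq⟩ x)
    have h0 : x ⟨0, hq⟩ ≠ 0 := hx _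
    exact mul_pos (hpos _) (by positivity)
  -- the full-measure set of vectors with all coordinates nonzero
  have hAmeas : MeasurableSet {x : Fin q → ℝ | ∀ i, x i ≠ 0} := by
    have : {x : Fin q → ℝ | ∀ i, x i ≠ 0} = ⋂ i, (fun x : Fin q → ℝ => x i) ⁻¹' ({0}ᶜ) := by
      ext x; simp
    rw [this]
    exact MeasurableSet.iInter fun i =>
      (measurable_pi_apply i) (measurableSet_singleton 0).compl
  have hA1 : π {x : Fin q → ℝ | ∀ i, x i ≠ 0} = 1 := by
    rw [← prob_compl_eq_zero_iff hAmeas, Set.compl_setOf]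
    exact ae_iff.1 hae
  -- part 2 : sum to one
  have hsum : (∑ j, μ j) = 1 := by
    have h1 : ∀ᵐ x ∂π, (∑ j, F j x) = 1 := by
      filter_upwards [hae] with x hx
      have hSx := hSpos x hx
      simp only [hF]
      rw [← Finset.sum_div, div_self hSx.ne']
    calc ∑ j, μ j = ∑ j, ∫ x, F j x ∂π := Finset.sum_congr rfl fun j _ => hμ' j
      _ = ∫ x, ∑ j, F j x ∂π := (integral_finset_sum _ fun j _ => hFint j).symm
      _ = ∫ _, (1 : ℝ) ∂π := integral_congr_ae h1
      _ = 1 := by simp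
  -- part 3 : positivity
  have hposμ : ∀ j, 0 < μ j := by
    intro j
    rw [hμ' j, integral_pos_iff_support_of_nonneg (hF_nonneg j) (hFint j)]
    have hsub : {x : Fin q → ℝ | ∀ i, x i ≠ 0} ⊆ Function.support (F j) := by
      intro x hx
      have hxj : x j ≠ 0 := hx j
      have : 0 < F j x := div_pos (mul_pos (hpos j) (by positivity)) (hSpos x hx)
      exact this.ne'
    refine lt_of_lt_of_le ?_ (measure_mono hsub)
    rw [hA1]
    norm_num
  -- key comparison
  have key : ∀ j k : Fin q, j ≠ k → lam k ≤ lam j →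
      μ k ≤ μ j ∧ (lam k < lam j → μ k < μ j) := by
    intro j k hjk hlk
    set e : Equiv.Perm (Fin q) := Equiv.swap j k with he
    set T : (Fin q → ℝ) → (Fin q → ℝ) := fun x => x ∘ e with hT
    have hTmeas : Measurable T :=
      measurable_pi_lambda _ fun i => measurable_pi_apply (e i)
    have hTmap : Measure.map T π = π := by
      refine (Measure.pi_eq fun s hs => ?_).symm
      rw [Measure.map_apply hTmeas (MeasurableSet.univ_pi hs)]
      have hpre : T ⁻¹' Set.pi Set.univ s = Set.pi Set.univ (fun i => s (e.symm i)) := by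
        ext x
        simp only [Set.mem_preimage, Set.mem_pi, Set.mem_univ, true_implies, hT,
          Function.comp_apply]
        constructor
        · intro h i
          have := h (e.symm i)
          simpa using this
        · intro h i
          have := h (e i)
          simpa using this
      rw [hpre, Measure.pi_pi]
      exact Equiv.prod_comp e.symm fun i => gaussianReal 0 1 (s i)
    have hcomp : ∀ f : (Fin q → ℝ) → ℝ, Measurable f →
        ∫ x, f (T x) ∂π = ∫ x, f x ∂π := by
      intro f hf
      conv_rhs => rw [← hTmap]
      rw [integral_map hTmeas.aemeasurable hf.aestronglyMeasurable]
    -- the symmetrized integrand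
    set H : (Fin q → ℝ) → ℝ := fun x => (F j x + F j (T x)) - (F k x + F k (T x)) with hH
    have hFjTint : Integrable (fun x => F j (T x)) π :=
      hint _ ((hFmeas j).comp hTmeas) (fun x => hF_nonneg j (T x)) fun x => hF_le_one j (T x)
    have hFkTint : Integrable (fun x => F k (T x)) π :=
      hint _ ((hFmeas k).comp hTmeas) (fun x => hF_nonneg k (T x)) fun x => hF_le_one k (T x)
    have hj2 : Integrable (fun x => F j x + F j (T x)) π := (hFint j).add hFjTint
    have hk2 : Integrable (fun x => F k x + F k (T x)) π := (hFint k).add hFkTint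
    have hHint : Integrable H π := hj2.sub hk2
    have hHeq : ∫ x, H x ∂π = (μ j + μ j) - (μ k + μ k) := by
      simp only [hH]
      rw [integral_sub hj2 hk2, integral_add (hFint j) hFjTint,
        integral_add (hFint k) hFkTint, hcomp _ (hFmeas j), hcomp _ (hFmeas k),
        ← hμ' j, ← hμ' k]
    -- pointwise analysis on the full-measure set
    have hpt : ∀ x : Fin q → ℝ, (∀ i, x i ≠ 0) →
        0 ≤ H x ∧ (lam k < lam j → 0 < H x) := by
      intro x hx
      have hxj : x j ≠ 0 := hx j
      have hxk : x k ≠ 0 := hx k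
      have ha : (0:ℝ) < x j ^ 2 := by positivity
      have hb : (0:ℝ) < x k ^ 2 := by positivity
      have hkj : k ≠ j := Ne.symm hjk
      have hkmem : k ∈ Finset.univ.erase j := Finset.mem_erase.2 ⟨hkj, Finset.mem_univ k⟩
      set c : ℝ := ∑ i ∈ (Finset.univ.erase j).erase k, lam i * x i ^ 2 with hc'
      have hc : 0 ≤ c := Finset.sum_nonneg fun i _ => hnum_nonneg i x
      have hSx : S x = lam j * x j ^ 2 + (lam k * x k ^ 2 + c) := by
        simp only [hS]
        rw [← Finset.add_sum_erase _ _ (Finset.mem_univ j),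
          ← Finset.add_sum_erase _ _ hkmem]
      have hSTx : S (T x) = lam j * x k ^ 2 + (lam k * x j ^ 2 + c) := by
        simp only [hS, hT, Function.comp_apply]
        rw [← Finset.add_sum_erase _ _ (Finset.mem_univ j),
          ← Finset.add_sum_erase _ _ hkmem]
        have h1 : e j = k := Equiv.swap_apply_left j k
        have h2 : e k = j := Equiv.swap_apply_right j k
        rw [h1, h2]
        congr 1
        congr 1
        refine Finset.sum_congr rfl fun i hi => ?_
        have hik : i ≠ k := (Finset.mem_erase.1 hi).1
        have hij : i ≠ j := (Finset.mem_erase.1 ((Finset.mem_erase.1 hi).2)).1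
        rw [Equiv.swap_apply_of_ne_of_ne hij hik]
      have hTxj : T x j = x k := by
        have h1 : e j = k := Equiv.swap_apply_left j k
        simp [hT, h1]
      have hTxk : T x k = x j := by
        have h2 : e k = j := Equiv.swap_apply_right j k
        simp [hT, h2]
      have hFjx : F j x = lam j * x j ^ 2 / (lam j * x j ^ 2 + lam k * x k ^ 2 + c) := by
        simp only [hF]; rw [hSx]; ring_nf
      have hFjT : F j (T x) = lam j * x k ^ 2 / (lam j * x k ^ 2 + lam k * x j ^ 2 + c) := by
        simp only [hF]; rw [hTxj, hSTx]; ring_nf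
      have hFkx : F k x = lam k * x k ^ 2 / (lam j * x j ^ 2 + lam k * x k ^ 2 + c) := by
        simp only [hF]; rw [hSx]; ring_nf
      have hFkT : F k (T x) = lam k * x j ^ 2 / (lam j * x k ^ 2 + lam k * x j ^ 2 + c) := by
        simp only [hF]; rw [hTxk, hSTx]; ring_nf
      constructor
      · have := stmt19_arith_le hlk (hpos k) ha hb hc
        simp only [hH]
        rw [hFjx, hFjT, hFkx, hFkT]
        linarith
      · intro hlt
        have := stmt19_arith_lt hlt (hpos k) ha hb hc
        simp only [hH]
        rw [hFjx, hFjT, hFkx, hFkT]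
        linarith
    have hH_nonneg : 0 ≤ᵐ[π] H := by
      filter_upwards [hae] with x hx
      exact (hpt x hx).1
    have hweak : μ k ≤ μ j := by
      have h0 : 0 ≤ ∫ x, H x ∂π := integral_nonneg_of_ae hH_nonneg
      rw [hHeq] at h0
      linarith
    refine ⟨hweak, fun hlt => ?_⟩
    have hsupp : {x : Fin q → ℝ | ∀ i, x i ≠ 0} ⊆ Function.support H := by
      intro x hx
      exact ((hpt x hx).2 hlt).ne'
    have h0 : 0 < ∫ x, H x ∂π := by
      rw [integral_pos_iff_support_of_nonneg_ae hH_nonneg hHint]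
      refine lt_of_lt_of_le ?_ (measure_mono hsupp)
      rw [hA1]
      norm_num
    rw [hHeq] at h0
    linarith
  refine ⟨?_, hsum, hposμ, ?_⟩
  · intro i j hij
    rcases eq_or_lt_of_le hij with h | h
    · exact le_of_eq (by rw [h])
    · exact (key i j (Fin.ne_of_lt h) (hmono i j hij)).1
  · intro j k hjk hlt
    have hne : j ≠ k := fun h => by rw [h] at hjk; omega
    exact (key j k hne hlt.le).2 hlt
end
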